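/- Let a_t be a nonnegative real sequence with a_0 = 0 satisfying a_{t+1} ≤ (1−λ)(√(a_t) + D)², where 0 < λ ≤ 1 and D ≥ 0. Then a_t ≤ 4(1−λ²)D²/λ² for all t ≥ 0. -/

import Mathlib

/-- Scalar bounded-memory lemma: a₀ = 0, a_{t+1} ≤ (1−λ)(√a_t + D)² implies
a_t ≤ 4(1−λ²)D²/λ². -/
theorem stmt_8 (a : ℕ → ℝ) (lam D : ℝ) (hlam0 : 0 < lam) (hlam1 : lam ≤ 1)
    (hD : 0 ≤ D) (ha : ∀ t, 0 ≤ a t) (ha0 : a 0 = 0)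
    (hrec : ∀ t, a (t + 1) ≤ (1 - lam) * (Real.sqrt (a t) + D) ^ 2) :
    ∀ t, a t ≤ 4 * (1 - lam ^ 2) * D ^ 2 / lam ^ 2 := by
  set c := Real.sqrt (1 - lam) with hc
  have h1l : 0 ≤ 1 - lam := by linarith
  have hc0 : 0 ≤ c := Real.sqrt_nonneg _
  have hc1 : c < 1 := by
    rw [hc]
    nlinarith [Real.sq_sqrt h1l, Real.sqrt_nonneg (1 - lam)]
  have hcsq : c ^ 2 = 1 - lam := Real.sq_sqrt h1l
  have h1c : 0 < 1 - c := by linarith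
  set y := c * D / (1 - c) with hy
  have hy0 : 0 ≤ y := div_nonneg (mul_nonneg hc0 hD) h1c.le
  -- invariant: a t ≤ y ^ 2
  have key : ∀ t, a t ≤ y ^ 2 := by
    intro t
    induction t with
    | zero => rw [ha0]; positivity
    | succ n ih =>
      have hs : Real.sqrt (a n) ≤ y := by
        calc Real.sqrt (a n) ≤ Real.sqrt (y ^ 2) := Real.sqrt_le_sqrt ih
        _ = y := Real.sqrt_sq hy0
      have hyD : c * (y + D) = y := by
        rw [hy]
        field_simp
        ring_nf
      calc a (n + 1) ≤ (1 - lam) * (Real.sqrt (a n) + D) ^ 2 := hrec n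
        _ ≤ c ^ 2 * (y + D) ^ 2 := by
            rw [hcsq]
            have h0 : (Real.sqrt (a n) + D) ^ 2 ≤ (y + D) ^ 2 := by
              nlinarith [Real.sqrt_nonneg (a n)]
            exact mul_le_mul_of_nonneg_left h0 h1l
        _ = (c * (y + D)) ^ 2 := by ring
        _ = y ^ 2 := by rw [hyD]
  -- y ≤ 2 c D / lam since 1 - c ≥ lam / 2
  have hhalf : lam / 2 ≤ 1 - c := by
    have : c ≤ 1 - lam / 2 := by
      rw [hc]
      have : Real.sqrt (1 - lam) ≤ Real.sqrt ((1 - lam / 2) ^ 2) := by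
        apply Real.sqrt_le_sqrt; nlinarith
      rwa [Real.sqrt_sq (by linarith)] at this
    linarith
  have hyle : y ≤ 2 * c * D / lam := by
    rw [hy, div_le_div_iff₀ h1c hlam0]
    nlinarith [mul_nonneg hc0 hD]
  intro t
  have := key t
  have hy2 : y ^ 2 ≤ 4 * (1 - lam) * D ^ 2 / lam ^ 2 := by
    have h2 : (2 * c * D / lam) ^ 2 = 4 * (1 - lam) * D ^ 2 / lam ^ 2 := by
      rw [div_pow, show (2 * c * D) ^ 2 = 4 * c ^ 2 * D ^ 2 by ring, hcsq]
    calc y ^ 2 ≤ (2 * c * D / lam) ^ 2 := by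
          apply pow_le_pow_left₀ hy0 hyle
      _ = _ := h2
  have hfin : 4 * (1 - lam) * D ^ 2 / lam ^ 2 ≤ 4 * (1 - lam ^ 2) * D ^ 2 / lam ^ 2 := by
    apply div_le_div_of_nonneg_right _ (by positivity)
    nlinarith [mul_nonneg (mul_nonneg hlam0.le h1l) (sq_nonneg D)]
  linarith
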